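/- Let Λ > 0 and μ > 0 be real numbers and x a natural number. For 0 ≤ u ≤ x define p̂(u; x) = Λ · ∫_0^∞ (x choose u) · exp(−μ t (x − u)) · (1 − exp(−μ t))^u · exp(−Λ t) dt. Then each p̂(u; x) is nonnegative and ∑_{u=0}^{x} p̂(u; x) = 1; that is, p̂(·; x) is a probability distribution on {0, 1, …, x}. -/

import Mathlib

open Real MeasureTheory

lemma exp_neg_Lam_integral (Λ : ℝ) (hΛ : 0 < Λ) :
    (∫ t in Set.Ioi (0:ℝ), Real.exp (-Λ * t)) = Λ⁻¹ := by
  have h : ∀ t : ℝ, Real.exp (-Λ * t) = Real.exp (-(Λ * t)) := by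
    intro t; ring_nf
  simp_rw [h]
  rw [MeasureTheory.integral_comp_mul_left_Ioi (fun y => Real.exp (-y)) 0 hΛ]
  simp [integral_exp_neg_Ioi, smul_eq_mul, integral_exp_Iic]

theorem departure_probabilities_form_distribution
    (Λ μ : ℝ) (hΛ : 0 < Λ) (hμ : 0 < μ) (x : ℕ) :
    (∀ u : ℕ, u ≤ x →
      0 ≤ Λ * ∫ t in Set.Ioi (0 : ℝ),
        (x.choose u : ℝ) * Real.exp (-μ * t * ((x : ℝ) - u)) *
          (1 - Real.exp (-μ * t)) ^ u * Real.exp (-Λ * t)) ∧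
    ∑ u ∈ Finset.range (x + 1),
      Λ * ∫ t in Set.Ioi (0 : ℝ),
        (x.choose u : ℝ) * Real.exp (-μ * t * ((x : ℝ) - u)) *
          (1 - Real.exp (-μ * t)) ^ u * Real.exp (-Λ * t) = 1 := by
  set f : ℕ → ℝ → ℝ := fun u t =>
    (x.choose u : ℝ) * Real.exp (-μ * t * ((x : ℝ) - u)) *
      (1 - Real.exp (-μ * t)) ^ u * Real.exp (-Λ * t) with hf
  have hnonneg : ∀ u : ℕ, u ≤ x → ∀ t ∈ Set.Ioi (0:ℝ), 0 ≤ f u t := by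
    intro u hu t ht
    have ht' : (0:ℝ) < t := ht
    have h1 : 0 ≤ 1 - Real.exp (-μ * t) := by
      have : Real.exp (-μ * t) ≤ 1 := by
        apply Real.exp_le_one_iff.mpr
        nlinarith
      linarith
    positivity
  have hintegrable : ∀ u : ℕ, u ≤ x → IntegrableOn (f u) (Set.Ioi (0:ℝ)) := by
    intro u hu
    apply Integrable.mono' (((exp_neg_integrableOn_Ioi 0 hΛ)).const_mul (x.choose u : ℝ))
    · apply Continuous.aestronglyMeasurable
      fun_prop
    · filter_upwards [ae_restrict_mem measurableSet_Ioi] with t ht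
      have ht' : (0:ℝ) < t := ht
      have h1 : Real.exp (-μ * t) ≤ 1 := by
        apply Real.exp_le_one_iff.mpr; nlinarith
      have h2 : 0 ≤ Real.exp (-μ * t) := (Real.exp_pos _).le
      have h3 : Real.exp (-μ * t * ((x : ℝ) - u)) ≤ 1 := by
        apply Real.exp_le_one_iff.mpr
        have hux : (u:ℝ) ≤ (x:ℝ) := by exact_mod_cast hu
        nlinarith [mul_pos hμ ht']
      have h4 : (1 - Real.exp (-μ * t)) ^ u ≤ 1 := by
        apply pow_le_one₀ (by linarith) (by linarith)
      rw [Real.norm_eq_abs, abs_of_nonneg (hnonneg u hu t ht)]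
      have hC : (0:ℝ) ≤ (x.choose u : ℝ) := Nat.cast_nonneg _
      have hE : (0:ℝ) < Real.exp (-Λ * t) := Real.exp_pos _
      calc f u t ≤ (x.choose u : ℝ) * 1 * 1 * Real.exp (-Λ * t) := by
            apply mul_le_mul_of_nonneg_right _ hE.le
            have h5 : 0 ≤ Real.exp (-μ * t * ((x : ℝ) - u)) := (Real.exp_pos _).le
            have h6 : 0 ≤ (1 - Real.exp (-μ * t)) ^ u := pow_nonneg (by linarith) _
            nlinarith [mul_le_mul_of_nonneg_left h3 hC]
        _ = (x.choose u : ℝ) * Real.exp (-Λ * t) := by ring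
  have hsum : ∀ t ∈ Set.Ioi (0:ℝ),
      ∑ u ∈ Finset.range (x + 1), f u t = Real.exp (-Λ * t) := by
    intro t ht
    have key : ∑ u ∈ Finset.range (x + 1),
        (x.choose u : ℝ) * Real.exp (-μ * t * ((x : ℝ) - u)) *
          (1 - Real.exp (-μ * t)) ^ u
        = ((1 - Real.exp (-μ * t)) + Real.exp (-μ * t)) ^ x := by
      rw [add_pow]
      apply Finset.sum_congr rfl
      intro u hu
      have hu' : u ≤ x := Nat.lt_succ_iff.mp (Finset.mem_range.mp hu)
      have hexp : Real.exp (-μ * t * ((x : ℝ) - u)) = Real.exp (-μ * t) ^ (x - u) := by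
        rw [← Real.exp_nat_mul]
        congr 1
        have : ((x - u : ℕ) : ℝ) = (x:ℝ) - u := by
          rw [Nat.cast_sub hu']
        rw [this]; ring
      rw [hexp]; ring
    have : ∑ u ∈ Finset.range (x + 1), f u t
        = (∑ u ∈ Finset.range (x + 1),
            (x.choose u : ℝ) * Real.exp (-μ * t * ((x : ℝ) - u)) *
              (1 - Real.exp (-μ * t)) ^ u) * Real.exp (-Λ * t) := by
      rw [Finset.sum_mul]
    rw [this, key]
    simp
  constructor
  · intro u hu
    apply mul_nonneg hΛ.le
    apply setIntegral_nonneg measurableSet_Ioi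
    exact fun t ht => hnonneg u hu t ht
  · have hswap : ∑ u ∈ Finset.range (x + 1), Λ * ∫ t in Set.Ioi (0:ℝ), f u t
        = Λ * ∫ t in Set.Ioi (0:ℝ), ∑ u ∈ Finset.range (x + 1), f u t := by
      rw [← Finset.mul_sum]
      congr 1
      rw [MeasureTheory.integral_finset_sum]
      intro u hu
      exact hintegrable u (Nat.lt_succ_iff.mp (Finset.mem_range.mp hu))
    rw [hswap]
    have : (∫ t in Set.Ioi (0:ℝ), ∑ u ∈ Finset.range (x + 1), f u t)
        = ∫ t in Set.Ioi (0:ℝ), Real.exp (-Λ * t) := by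
      apply setIntegral_congr_fun measurableSet_Ioi
      intro t ht
      exact hsum t ht
    rw [this, exp_neg_Lam_integral Λ hΛ]
    field_simp
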